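/- arXiv:2509.03076 — 2 statements merged into one kernel-verified Lean document; each statement's English description precedes it below -/
import Mathlib

section
/- Let f be a holomorphic self-map of the unit disk D and fix z_0 ∈ D. Then there exist a holomorphic map h : D → D and automorphisms γ_n of D such that γ_n^{-1} ∘ f^n → h uniformly on compact subsets and moreover γ_n^{-1}(f^n(z_0)) = 0 for all n and h(z_0) = 0. -/
set_option maxHeartbeats 1000000

open Complex Metric Filter Set Topology

/-- Inverse hyperbolic tangent. -/
noncomputable def artanh (t : ℝ) : ℝ := (1/2) * Real.log ((1 + t) / (1 - t))

/-- Poincaré distance on the unit disk. -/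
noncomputable def pd (z w : ℂ) : ℝ :=
  artanh (‖(w - z) / (1 - (starRingEnd ℂ) z * w)‖)

/-- Holomorphic self-map of the unit disk. -/
def HolSelfDisk (f : ℂ → ℂ) : Prop :=
  DifferentiableOn ℂ f (ball (0:ℂ) 1) ∧ MapsTo f (ball (0:ℂ) 1) (ball (0:ℂ) 1)

/-- A pair of maps that are mutually inverse holomorphic self-maps of the disk,
i.e. an automorphism of the disk together with its inverse. -/
def IsDiskAutPair (γ γinv : ℂ → ℂ) : Prop :=
  HolSelfDisk γ ∧ HolSelfDisk γinv ∧
  (∀ z ∈ ball (0:ℂ) 1, γinv (γ z) = z) ∧ (∀ z ∈ ball (0:ℂ) 1, γ (γinv z) = z)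

noncomputable def Complex.abs : AbsoluteValue ℂ ℝ where
  toFun z := ‖z‖
  map_mul' := norm_mul
  nonneg' := norm_nonneg
  eq_zero' _ := norm_eq_zero
  add_le' := norm_add_le

@[simp] lemma Complex.norm_eq_abs (z : ℂ) : ‖z‖ = Complex.abs z := rfl

lemma Complex.abs_apply (z : ℂ) : Complex.abs z = Real.sqrt (normSq z) := Complex.norm_def z

@[simp] lemma Complex.abs_ofReal (r : ℝ) : Complex.abs (r : ℂ) = |r| := by
  rw [← Complex.norm_eq_abs]; simp

@[simp] lemma Complex.abs_conj (z : ℂ) : Complex.abs ((starRingEnd ℂ) z) = Complex.abs z :=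
  Complex.norm_conj z

lemma Complex.sq_abs (z : ℂ) : Complex.abs z ^ 2 = normSq z := Complex.sq_norm z

lemma Complex.continuous_abs : Continuous Complex.abs := continuous_norm

lemma Complex.abs_le_abs_of_mapsTo_ball_self {f : ℂ → ℂ} {R : ℝ} {z : ℂ}
    (hd : DifferentiableOn ℂ f (ball 0 R)) (h_maps : MapsTo f (ball 0 R) (ball 0 R))
    (h₀ : f 0 = 0) (hz : Complex.abs z < R) : Complex.abs (f z) ≤ Complex.abs z :=
  Complex.norm_le_norm_of_mapsTo_ball hd (h_maps.mono_right ball_subset_closedBall) h₀ hz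

noncomputable def mob (a z : ℂ) : ℂ := (z - a) / (1 - (starRingEnd ℂ) a * z)

lemma mob_key (a z : ℂ) :
    normSq (1 - (starRingEnd ℂ) a * z) - normSq (z - a) = (1 - normSq a) * (1 - normSq z) := by
  simp only [normSq_apply, sub_re, sub_im, mul_re, mul_im, one_re, one_im,
    conj_re, conj_im]
  ring

lemma denom_ne (a z : ℂ) (h : Complex.abs a * Complex.abs z < 1) :
    1 - (starRingEnd ℂ) a * z ≠ 0 := by
  intro hc
  have h1 : Complex.abs ((starRingEnd ℂ) a * z) < 1 := by
    rwa [map_mul, abs_conj]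
  rw [sub_eq_zero] at hc
  rw [← hc] at h1
  simp at h1

lemma denom_ne' {a z : ℂ} (ha : Complex.abs a < 1) (hz : Complex.abs z < 1) :
    1 - (starRingEnd ℂ) a * z ≠ 0 := by
  refine denom_ne a z ?_
  calc Complex.abs a * Complex.abs z ≤ 1 * Complex.abs z :=
        mul_le_mul_of_nonneg_right ha.le (Complex.abs.nonneg z)
    _ < 1 := by simpa using hz

lemma normSq_lt_one_iff {z : ℂ} : normSq z < 1 ↔ Complex.abs z < 1 := by
  rw [← Complex.sq_abs]
  constructor
  · intro h; nlinarith [Complex.abs.nonneg z]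
  · intro h; nlinarith [Complex.abs.nonneg z]

lemma abs_mob_lt_one {a z : ℂ} (ha : Complex.abs a < 1) (hz : Complex.abs z < 1) :
    Complex.abs (mob a z) < 1 := by
  have hd := denom_ne' ha hz
  have hkey := mob_key a z
  have ha' : normSq a < 1 := normSq_lt_one_iff.2 ha
  have hz' : normSq z < 1 := normSq_lt_one_iff.2 hz
  have hpos : 0 < normSq (1 - (starRingEnd ℂ) a * z) := normSq_pos.2 hd
  have hlt : normSq (z - a) < normSq (1 - (starRingEnd ℂ) a * z) := by nlinarith
  rw [mob, map_div₀, div_lt_one (Complex.abs.pos hd)]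
  rw [← Real.sqrt_lt_sqrt_iff (normSq_nonneg _)] at hlt
  simpa [Complex.abs_apply] using hlt

lemma mob_self (a : ℂ) : mob a a = 0 := by
  simp [mob]

lemma mob_zero_right (a : ℂ) : mob (-a) 0 = a := by
  simp [mob]

lemma mob_mob {a z : ℂ} (ha : Complex.abs a < 1) (hz : Complex.abs z < 1) :
    mob (-a) (mob a z) = z := by
  have hd := denom_ne' ha hz
  have ha2 : 1 - (starRingEnd ℂ) a * a ≠ 0 :=
    denom_ne a a (by nlinarith [Complex.abs.nonneg a])
  rw [mob, mob]
  rw [map_neg, neg_mul, sub_neg_eq_add, sub_neg_eq_add]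
  have ha2' : (1 : ℂ) - a * (starRingEnd ℂ) a ≠ 0 := by
    rwa [mul_comm ((starRingEnd ℂ) a) a] at ha2
  have e1 : (z - a) / (1 - (starRingEnd ℂ) a * z) + a
      = z * (1 - a * (starRingEnd ℂ) a) / (1 - (starRingEnd ℂ) a * z) := by
    rw [div_add' _ _ _ hd]; congr 1; ring
  have e2 : 1 + (starRingEnd ℂ) a * ((z - a) / (1 - (starRingEnd ℂ) a * z))
      = (1 - a * (starRingEnd ℂ) a) / (1 - (starRingEnd ℂ) a * z) := by
    rw [← mul_div_assoc, one_add_div hd]; congr 1; ring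
  rw [e1, e2]
  field_simp
  exact mul_div_cancel_right₀ z (by rwa [mul_comm] at hd)

lemma mob_mob' {a z : ℂ} (ha : Complex.abs a < 1) (hz : Complex.abs z < 1) :
    mob a (mob (-a) z) = z := by
  have := mob_mob (a := -a) (z := z) (by simpa using ha) hz
  simpa using this

lemma mob_differentiableOn {a : ℂ} (ha : Complex.abs a < 1) :
    DifferentiableOn ℂ (mob a) (ball (0:ℂ) 1) := by
  apply DifferentiableOn.div
  · exact (differentiable_id.sub_const a).differentiableOn
  · exact ((differentiable_const _).mul differentiable_id).const_sub 1 |>.differentiableOn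
  · intro z hz
    exact denom_ne' ha (by simpa [mem_ball, dist_eq] using hz)


lemma mem_ball_iff_abs {z : ℂ} : z ∈ ball (0:ℂ) 1 ↔ Complex.abs z < 1 := by
  simp [mem_ball, Complex.dist_eq]

lemma mob_holSelf {a : ℂ} (ha : Complex.abs a < 1) : HolSelfDisk (mob a) :=
  ⟨mob_differentiableOn ha, fun z hz => mem_ball_iff_abs.2
    (abs_mob_lt_one ha (mem_ball_iff_abs.1 hz))⟩

lemma HolSelfDisk.comp {F G : ℂ → ℂ} (hF : HolSelfDisk F) (hG : HolSelfDisk G) :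
    HolSelfDisk (fun z => F (G z)) :=
  ⟨hF.1.comp hG.1 hG.2, hF.2.comp hG.2⟩

/-- Schwarz–Pick lemma. -/
lemma schwarz_pick {F : ℂ → ℂ} (hF : HolSelfDisk F) {a z : ℂ}
    (ha : Complex.abs a < 1) (hz : Complex.abs z < 1) :
    Complex.abs (mob (F a) (F z)) ≤ Complex.abs (mob a z) := by
  have haF : Complex.abs (F a) < 1 :=
    mem_ball_iff_abs.1 (hF.2 (mem_ball_iff_abs.2 ha))
  set Φ : ℂ → ℂ := fun w => mob (F a) (F (mob (-a) w)) with hΦ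
  have hma : Complex.abs (-a) < 1 := by simpa using ha
  have hΦhol : HolSelfDisk Φ :=
    HolSelfDisk.comp (mob_holSelf haF) (HolSelfDisk.comp hF (mob_holSelf hma))
  have hΦ0 : Φ 0 = 0 := by
    rw [hΦ]; simp only; rw [mob_zero_right, mob_self]
  have key := Complex.abs_le_abs_of_mapsTo_ball_self hΦhol.1 hΦhol.2 hΦ0
    (abs_mob_lt_one ha hz)
  rw [hΦ] at key
  simp only at key
  rwa [mob_mob ha hz] at key

/-- Euclidean distance controlled by pseudo-hyperbolic. -/
lemma abs_sub_le_two_mob {x y : ℂ} (hx : Complex.abs x < 1) (hy : Complex.abs y < 1) :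
    Complex.abs (x - y) ≤ 2 * Complex.abs (mob y x) := by
  have hd := denom_ne' hy hx
  have h2 : Complex.abs (1 - (starRingEnd ℂ) y * x) ≤ 2 := by
    calc Complex.abs (1 - (starRingEnd ℂ) y * x)
        ≤ Complex.abs 1 + Complex.abs ((starRingEnd ℂ) y * x) := by
          simpa [sub_eq_add_neg] using Complex.abs.add_le 1 (-((starRingEnd ℂ) y * x))
      _ ≤ 1 + 1 := by
          simp only [map_one, map_mul, abs_conj]
          have : Complex.abs y * Complex.abs x ≤ 1 := by nlinarith [Complex.abs.nonneg x, Complex.abs.nonneg y]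
          linarith
      _ = 2 := by norm_num
  have : Complex.abs (x - y) = Complex.abs (mob y x) * Complex.abs (1 - (starRingEnd ℂ) y * x) := by
    rw [mob, map_div₀, div_mul_cancel₀]
    exact (Complex.abs.ne_zero hd)
  rw [this]
  nlinarith [Complex.abs.nonneg (mob y x)]

/-- Uniform bound on pseudo-hyperbolic distance away from 1. -/
lemma abs_mob_le_bound {a z : ℂ} {t r : ℝ} (ht : t < 1) (hr : r < 1)
    (ha : Complex.abs a ≤ t) (hz : Complex.abs z ≤ r) (ht0 : 0 ≤ t) (hr0 : 0 ≤ r) :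
    Complex.abs (mob a z) ≤ Real.sqrt (1 - (1 - t^2) * (1 - r^2) / 4) := by
  have ha1 : Complex.abs a < 1 := lt_of_le_of_lt ha ht
  have hz1 : Complex.abs z < 1 := lt_of_le_of_lt hz hr
  have hd := denom_ne' ha1 hz1
  have hkey := mob_key a z
  have hden2 : Complex.abs (1 - (starRingEnd ℂ) a * z) ≤ 2 := by
    calc Complex.abs (1 - (starRingEnd ℂ) a * z)
        ≤ Complex.abs 1 + Complex.abs ((starRingEnd ℂ) a * z) := by
          simpa [sub_eq_add_neg] using Complex.abs.add_le 1 (-((starRingEnd ℂ) a * z))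
      _ ≤ 1 + 1 := by
          simp only [map_one, map_mul, abs_conj]
          have : Complex.abs a * Complex.abs z ≤ 1 := by
            nlinarith [Complex.abs.nonneg a, Complex.abs.nonneg z]
          linarith
      _ = 2 := by norm_num
  have hns : normSq (mob a z) ≤ 1 - (1 - t^2) * (1 - r^2) / 4 := by
    have hnd : normSq (1 - (starRingEnd ℂ) a * z) ≤ 4 := by
      rw [← Complex.sq_abs]
      nlinarith [Complex.abs.nonneg (1 - (starRingEnd ℂ) a * z)]
    have hndpos : 0 < normSq (1 - (starRingEnd ℂ) a * z) := normSq_pos.2 hd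
    have h1 : normSq (mob a z) = normSq (z - a) / normSq (1 - (starRingEnd ℂ) a * z) := by
      simp [mob, normSq_div]
    rw [h1]
    rw [div_le_iff₀ hndpos]
    have hna : normSq a ≤ t^2 := by rw [← Complex.sq_abs]; nlinarith [Complex.abs.nonneg a]
    have hnz : normSq z ≤ r^2 := by rw [← Complex.sq_abs]; nlinarith [Complex.abs.nonneg z]
    have e1 : 1 - t^2 ≤ 1 - normSq a := by linarith
    have e2 : 1 - r^2 ≤ 1 - normSq z := by linarith
    have e0 : (0:ℝ) ≤ 1 - t^2 := by nlinarith
    have e0' : (0:ℝ) ≤ 1 - r^2 := by nlinarith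
    have e3 : (1-t^2)*(1-r^2) ≤ (1 - normSq a)*(1 - normSq z) :=
      mul_le_mul e1 e2 e0' (by linarith [normSq_nonneg a])
    have e4 : (1-t^2)*(1-r^2)/4 * normSq (1 - (starRingEnd ℂ) a * z) ≤ (1-t^2)*(1-r^2) := by
      have h0 : 0 ≤ (1-t^2)*(1-r^2)/4 := by positivity
      nlinarith
    linarith
  calc Complex.abs (mob a z) = Real.sqrt (normSq (mob a z)) := by
        rw [Complex.abs_apply]
    _ ≤ _ := Real.sqrt_le_sqrt hns

lemma abs_sub_le'' (a b : ℂ) : Complex.abs (a - b) ≤ Complex.abs a + Complex.abs b := by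
  rw [← Complex.norm_eq_abs, ← Complex.norm_eq_abs, ← Complex.norm_eq_abs]
  exact norm_sub_le a b

/-- Quantitative Schwarz stability: if `ψ(0)=0`, `ψ(t)=s` with `0<s≤t<1` then `ψ` is
`(t-s)`-close to the identity on compacts. -/
lemma key_est {ψ : ℂ → ℂ} (hψ : HolSelfDisk ψ) (h0 : ψ 0 = 0) {t s : ℝ}
    (ht0 : 0 < t) (ht1 : t < 1) (hs0 : 0 < s) (hst : s ≤ t) (hψt : ψ (t:ℂ) = (s:ℂ))
    {ρ : ℝ} (hρ0 : 0 ≤ ρ) (hρ1 : ρ < 1) {z : ℂ} (hz : Complex.abs z < 1)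
    (hρz : Complex.abs (mob (t:ℂ) z) ≤ ρ) :
    Complex.abs (ψ z - z) ≤ (1 + ρ) / (1 - ρ) * ((t - s) / t) := by
  set u : ℂ → ℂ := dslope ψ 0 with hu
  set K : ℝ := (1 + ρ) / (1 - ρ) with hK
  have hK1 : 1 ≤ K := by
    rw [hK, le_div_iff₀ (by linarith)]; linarith
  have hK0 : 0 < K := by linarith
  -- u is holomorphic on the ball and bounded by 1
  have humaps : MapsTo ψ (ball (0:ℂ) 1) (ball (ψ 0) 1) := by rw [h0]; simpa using hψ.2
  have hudiff : DifferentiableOn ℂ u (ball (0:ℂ) 1) :=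
    (differentiableOn_dslope (isOpen_ball.mem_nhds (by simp))).mpr hψ.1
  have hub : ∀ w ∈ ball (0:ℂ) 1, Complex.abs (u w) ≤ 1 := by
    intro w hw
    have := Complex.norm_dslope_le_div_of_mapsTo_ball hψ.1 (humaps.mono_right ball_subset_closedBall) hw
    simpa using this
  have hut : u (t:ℂ) = ((s/t : ℝ) : ℂ) := by
    rw [hu, dslope_of_ne _ (by exact_mod_cast ht0.ne'), slope_def_field, h0, hψt]
    push_cast
    field_simp
    rw [sub_zero, sub_zero]
  -- main estimate on |1 - u z|
  have main : Complex.abs (1 - u z) ≤ K * (1 - s/t) := by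
    have hst1 : s/t ≤ 1 := by rw [div_le_one ht0]; exact hst
    have hst0 : 0 < s/t := by positivity
    refine le_of_forall_pos_le_add ?_
    intro ε' hε'
    set ε : ℝ := min (ε' / (2*K + 2)) (1/2) with hε
    have hεpos : 0 < ε := lt_min (by positivity) (by norm_num)
    have hε1 : ε < 1 := lt_of_le_of_lt (min_le_right _ _) (by norm_num)
    set v : ℂ → ℂ := fun w => (1 - (ε:ℂ)) * u w with hv
    have hvd : DifferentiableOn ℂ v (ball (0:ℂ) 1) := hudiff.const_mul _
    have hvm : MapsTo v (ball (0:ℂ) 1) (ball (0:ℂ) 1) := by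
      intro w hw
      rw [mem_ball_iff_abs]
      rw [hv]
      simp only [map_mul]
      have h1 : Complex.abs (1 - (ε:ℂ)) = 1 - ε := by
        rw [show (1:ℂ) - (ε:ℂ) = ((1 - ε : ℝ) : ℂ) by push_cast; ring, Complex.abs_ofReal,
          _root_.abs_of_pos (by linarith)]
      rw [h1]
      calc (1 - ε) * Complex.abs (u w) ≤ (1 - ε) * 1 :=
            mul_le_mul_of_nonneg_left (hub w hw) (by linarith)
        _ < 1 := by linarith
    have hsp := schwarz_pick (F := v) ⟨hvd, hvm⟩ (a := (t:ℂ)) (z := z)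
      (by rwa [Complex.abs_ofReal, abs_of_pos ht0]) hz
    -- p := v t is a positive real
    set p : ℝ := (1 - ε) * (s/t) with hp
    have hvt : v (t:ℂ) = (p:ℂ) := by rw [hv]; simp only; rw [hut, hp]; push_cast; ring
    have hp0 : 0 < p := by rw [hp]; exact mul_pos (by linarith) hst0
    have hp1 : p < 1 := by
      calc p ≤ (1-ε) * 1 := mul_le_mul_of_nonneg_left hst1 (by linarith)
        _ < 1 := by linarith
    set w : ℂ := v z with hw
    have hw1 : Complex.abs w < 1 := mem_ball_iff_abs.1 (hvm (mem_ball_iff_abs.2 hz))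
    -- from Schwarz–Pick: |w - p| ≤ ρ * |1 - p w|
    have habs : Complex.abs (w - (p:ℂ)) ≤ ρ * Complex.abs (1 - (p:ℂ) * w) := by
      have hd : 1 - (starRingEnd ℂ) (p:ℂ) * w ≠ 0 :=
        denom_ne' (by rwa [Complex.abs_ofReal, abs_of_pos hp0]) hw1
      have h1 := hsp.trans hρz
      rw [hvt] at h1
      rw [mob, map_div₀, div_le_iff₀ (AbsoluteValue.pos _ hd)] at h1
      calc Complex.abs (w - (p:ℂ)) ≤ ρ * Complex.abs (1 - (starRingEnd ℂ) (p:ℂ) * w) := h1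
        _ = ρ * Complex.abs (1 - (p:ℂ) * w) := by rw [Complex.conj_ofReal]
    -- derive |1 - w| ≤ K (1 - p)
    have h1pw : Complex.abs (1 - (p:ℂ) * w) ≤ (1 - p) + p * Complex.abs (1 - w) := by
      have : (1:ℂ) - (p:ℂ) * w = ((1 - p : ℝ):ℂ) + (p:ℂ) * (1 - w) := by push_cast; ring
      rw [this]
      calc Complex.abs (((1 - p : ℝ):ℂ) + (p:ℂ) * (1 - w))
          ≤ Complex.abs ((1 - p : ℝ):ℂ) + Complex.abs ((p:ℂ) * (1 - w)) := Complex.abs.add_le _ _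
        _ = (1 - p) + p * Complex.abs (1 - w) := by
            rw [map_mul, Complex.abs_ofReal, Complex.abs_ofReal,
              _root_.abs_of_pos hp0, _root_.abs_of_nonneg (by linarith)]
    have h1w : Complex.abs (1 - w) ≤ (1 - p) + Complex.abs (w - (p:ℂ)) := by
      have : (1:ℂ) - w = ((1 - p : ℝ):ℂ) - (w - (p:ℂ)) := by push_cast; ring
      rw [this]
      calc Complex.abs (((1 - p : ℝ):ℂ) - (w - (p:ℂ)))
          ≤ Complex.abs ((1 - p : ℝ):ℂ) + Complex.abs (w - (p:ℂ)) := abs_sub_le'' _ _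
        _ = (1 - p) + Complex.abs (w - (p:ℂ)) := by
            rw [Complex.abs_ofReal, _root_.abs_of_nonneg (by linarith)]
    have hcomb : Complex.abs (1 - w) ≤ K * (1 - p) := by
      have hle : Complex.abs (1 - w) ≤ (1 - p) + ρ * ((1 - p) + p * Complex.abs (1 - w)) := by
        calc Complex.abs (1 - w) ≤ (1 - p) + Complex.abs (w - (p:ℂ)) := h1w
          _ ≤ (1 - p) + ρ * Complex.abs (1 - (p:ℂ) * w) := by linarith [habs]
          _ ≤ (1 - p) + ρ * ((1 - p) + p * Complex.abs (1 - w)) := by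
              have := mul_le_mul_of_nonneg_left h1pw hρ0
              linarith
      have hρp : ρ * p ≤ ρ := by nlinarith
      rw [hK, div_mul_eq_mul_div, le_div_iff₀ (by linarith : (0:ℝ) < 1 - ρ)]
      nlinarith [Complex.abs.nonneg (1 - w)]
    -- pass from v to u
    have huw : Complex.abs (1 - u z) ≤ Complex.abs (1 - w) + ε * Complex.abs (u z) := by
      have : (1:ℂ) - u z = (1 - w) - (ε:ℂ) * u z := by rw [hw, hv]; push_cast; ring
      rw [this]
      calc Complex.abs ((1 - w) - (ε:ℂ) * u z)
          ≤ Complex.abs (1 - w) + Complex.abs ((ε:ℂ) * u z) := abs_sub_le'' _ _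
        _ = Complex.abs (1 - w) + ε * Complex.abs (u z) := by
            rw [map_mul, Complex.abs_ofReal, _root_.abs_of_pos hεpos]
    have huz1 : Complex.abs (u z) ≤ 1 := hub z (mem_ball_iff_abs.2 hz)
    have hfin : Complex.abs (1 - u z) ≤ K * (1 - s/t) + (2*K + 2) * ε := by
      have h1p : 1 - p = (1 - s/t) + ε * (s/t) := by rw [hp]; ring
      have : K * (1 - p) ≤ K * (1 - s/t) + K * ε := by
        rw [h1p, mul_add]
        have : K * (ε * (s/t)) ≤ K * ε := by
          have := mul_le_mul_of_nonneg_left (mul_le_mul_of_nonneg_left hst1 hεpos.le) hK0.le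
          simpa [mul_assoc] using this
        linarith
      have hε1' : ε * Complex.abs (u z) ≤ ε := by nlinarith [Complex.abs.nonneg (u z)]
      nlinarith
    have : (2*K + 2) * ε ≤ ε' := by
      have : ε ≤ ε' / (2*K + 2) := min_le_left _ _
      rw [← le_div_iff₀' (by linarith : (0:ℝ) < 2*K + 2)]
      exact this
    linarith
  -- conclude
  rcases eq_or_ne z 0 with rfl | hz0
  · rw [h0]
    simp only [sub_zero, map_zero]
    exact mul_nonneg (div_nonneg (by linarith) (by linarith)) (div_nonneg (by linarith) ht0.le)
  · have huzval : u z = ψ z / z := by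
      rw [hu, dslope_of_ne _ hz0, slope_def_field, h0]
      field_simp
      ring
    have : ψ z - z = z * (u z - 1) := by
      rw [huzval]; field_simp
    rw [this, map_mul]
    have h1 : Complex.abs (u z - 1) = Complex.abs (1 - u z) := by
      rw [← Complex.abs.map_neg]; ring_nf
    calc Complex.abs z * Complex.abs (u z - 1) ≤ 1 * Complex.abs (u z - 1) :=
          mul_le_mul_of_nonneg_right hz.le (Complex.abs.nonneg _)
      _ = Complex.abs (1 - u z) := by rw [one_mul, h1]
      _ ≤ K * (1 - s/t) := main
      _ = K * ((t - s)/t) := by rw [hK]; field_simp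

theorem stmt3 (f : ℂ → ℂ) (hf : HolSelfDisk f) (z₀ : ℂ) (hz₀ : z₀ ∈ ball (0:ℂ) 1) :
    ∃ (h : ℂ → ℂ) (γ γinv : ℕ → ℂ → ℂ),
      HolSelfDisk h ∧ (∀ n, IsDiskAutPair (γ n) (γinv n)) ∧
      TendstoLocallyUniformlyOn (fun n z => γinv n (f^[n] z)) h atTop (ball (0:ℂ) 1) ∧
      (∀ n, γinv n (f^[n] z₀) = 0) ∧ h z₀ = 0 := by
  have hz₀' : Complex.abs z₀ < 1 := mem_ball_iff_abs.1 hz₀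
  -- iterates are holomorphic self-maps
  have hfn : ∀ n, HolSelfDisk (f^[n]) := by
    intro n
    induction n with
    | zero => exact ⟨differentiableOn_id, mapsTo_id _⟩
    | succ n ih =>
        rw [Function.iterate_succ']
        exact hf.comp ih
  set a : ℕ → ℂ := fun n => f^[n] z₀ with ha_def
  have han : ∀ n, Complex.abs (a n) < 1 := fun n =>
    mem_ball_iff_abs.1 ((hfn n).2 hz₀)
  have ha_succ : ∀ n, a (n + 1) = f (a n) := fun n => Function.iterate_succ_apply' f n z₀
  set g : ℕ → ℂ → ℂ := fun n z => mob (a n) (f^[n] z) with hg_def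
  have hghol : ∀ n, HolSelfDisk (g n) := fun n =>
    (mob_holSelf (han n)).comp (hfn n)
  have hgball : ∀ n z, Complex.abs z < 1 → Complex.abs (g n z) < 1 := fun n z hz =>
    mem_ball_iff_abs.1 ((hghol n).2 (mem_ball_iff_abs.2 hz))
  have hmono : ∀ z, Complex.abs z < 1 → ∀ n,
      Complex.abs (g (n + 1) z) ≤ Complex.abs (g n z) := by
    intro z hz n
    have hiter : Complex.abs (f^[n] z) < 1 := mem_ball_iff_abs.1 ((hfn n).2 (mem_ball_iff_abs.2 hz))
    have := schwarz_pick hf (han n) hiter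
    simp only [hg_def]
    rw [Function.iterate_succ_apply' f n z, ha_succ n]
    exact this
  have hanti : ∀ z, Complex.abs z < 1 → Antitone (fun n => Complex.abs (g n z)) := fun z hz =>
    antitone_nat_of_succ_le (hmono z hz)
  have hbd : ∀ z, Complex.abs z < 1 → ∀ n, Complex.abs (g n z) ≤ Complex.abs (mob z₀ z) :=
    fun z hz n => schwarz_pick (hfn n) hz₀' hz
  have hbdd : ∀ z, BddBelow (range fun n => Complex.abs (g n z)) :=
    fun z => ⟨0, by rintro x ⟨n, rfl⟩; exact Complex.abs.nonneg _⟩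
  have hL : ∀ z, Complex.abs z < 1 →
      Tendsto (fun n => Complex.abs (g n z)) atTop (𝓝 (⨅ n, Complex.abs (g n z))) :=
    fun z hz => tendsto_atTop_ciInf (hanti z hz) (hbdd z)
  have hg_z₀ : ∀ n, g n z₀ = 0 := fun n => mob_self (a n)
  by_cases hcase : ∀ z ∈ ball (0:ℂ) 1, (⨅ n, Complex.abs (g n z)) = 0
  · -- degenerate case : h = 0
    refine ⟨fun _ => 0, fun n z => mob (-(a n)) z, fun n z => mob (a n) z,
      ⟨(differentiableOn_const _), fun z _ => mem_ball_iff_abs.2 (by simp)⟩, ?_, ?_, ?_, rfl⟩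
    · intro n
      have hma : Complex.abs (-(a n)) < 1 := by simpa using han n
      exact ⟨mob_holSelf hma, mob_holSelf (han n),
        fun z hz => mob_mob' (han n) (mem_ball_iff_abs.1 hz),
        fun z hz => mob_mob (han n) (mem_ball_iff_abs.1 hz)⟩
    · rw [tendstoLocallyUniformlyOn_iff_forall_isCompact isOpen_ball]
      intro K hKsub hKc
      rw [Metric.tendstoUniformlyOn_iff]
      intro ε hε
      obtain ⟨r, hr0, hr1, hKr⟩ : ∃ r, 0 ≤ r ∧ r < 1 ∧ ∀ z ∈ K, Complex.abs z ≤ r := by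
        rcases K.eq_empty_or_nonempty with rfl | hne
        · exact ⟨0, le_refl _, by norm_num, by simp⟩
        · obtain ⟨x, hxK, hx⟩ := hKc.exists_isMaxOn hne Complex.continuous_abs.continuousOn
          exact ⟨Complex.abs x, Complex.abs.nonneg x,
            mem_ball_iff_abs.1 (hKsub hxK), fun z hz => hx hz⟩
      have hden : (0:ℝ) < 1 - r^2 := by nlinarith
      set δ : ℝ := ε * (1 - r^2) / 8 with hδ
      have hδ0 : 0 < δ := by positivity
      obtain ⟨t, htK, htcov⟩ := hKc.elim_nhds_subcover (fun w => ball w δ)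
        (fun x _ => ball_mem_nhds x hδ0)
      have hev : ∀ᶠ n in atTop, ∀ w ∈ t, Complex.abs (g n w) < ε / 2 := by
        rw [Filter.eventually_all_finset]
        intro w hw
        have hwK := htK w hw
        have hwball : Complex.abs w < 1 := mem_ball_iff_abs.1 (hKsub hwK)
        have h0 := hcase w (hKsub hwK)
        have := hL w hwball
        rw [h0] at this
        exact this.eventually_lt_const (by positivity)
      filter_upwards [hev] with n hn z hzK
      obtain ⟨w, hwt, hzw⟩ : ∃ w ∈ t, z ∈ ball w δ := by
        have := htcov hzK
        simpa using this
      have hwK := htK w hwt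
      have hwb : Complex.abs w < 1 := mem_ball_iff_abs.1 (hKsub hwK)
      have hzb : Complex.abs z < 1 := mem_ball_iff_abs.1 (hKsub hzK)
      have h1 : Complex.abs (g n z - g n w) ≤ 2 * Complex.abs (mob w z) := by
        refine le_trans (abs_sub_le_two_mob (hgball n z hzb) (hgball n w hwb)) ?_
        have := schwarz_pick (hghol n) hwb hzb
        linarith
      have hd1 : 1 - r^2 ≤ Complex.abs (1 - (starRingEnd ℂ) w * z) := by
        have habs : Complex.abs ((starRingEnd ℂ) w * z) ≤ r^2 := by
          rw [map_mul, abs_conj]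
          calc Complex.abs w * Complex.abs z ≤ r * r :=
                mul_le_mul (hKr w hwK) (hKr z hzK) (Complex.abs.nonneg _) hr0
            _ = r^2 := by ring
        have h3 : (1:ℝ) ≤ Complex.abs (1 - (starRingEnd ℂ) w * z)
            + Complex.abs ((starRingEnd ℂ) w * z) := by
          have := Complex.abs.add_le (1 - (starRingEnd ℂ) w * z) ((starRingEnd ℂ) w * z)
          simpa using this
        linarith
      have h2 : Complex.abs (mob w z) ≤ Complex.abs (z - w) / (1 - r^2) := by
        rw [mob, map_div₀]
        exact div_le_div_of_nonneg_left (Complex.abs.nonneg _) hden hd1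
      have hzwd : Complex.abs (z - w) < δ := by
        rw [mem_ball, Complex.dist_eq] at hzw
        exact hzw
      have hδr : δ / (1 - r^2) = ε / 8 := by
        rw [hδ]; field_simp
      have hgw := hn w hwt
      calc dist (0:ℂ) (g n z) = Complex.abs (g n z) := by
            rw [dist_comm, Complex.dist_eq, sub_zero]; rfl
        _ ≤ Complex.abs (g n w) + Complex.abs (g n z - g n w) := by
            have := Complex.abs.add_le (g n w) (g n z - g n w)
            simpa using this
        _ ≤ ε / 2 + 2 * (Complex.abs (z - w) / (1 - r^2)) := by
            have h5 : Complex.abs (g n z - g n w) ≤ 2 * (Complex.abs (z - w) / (1 - r^2)) := by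
              have := mul_le_mul_of_nonneg_left h2 (by norm_num : (0:ℝ) ≤ 2)
              linarith
            linarith
        _ < ε := by
            have h6 : Complex.abs (z - w) / (1 - r^2) < δ / (1 - r^2) := by gcongr
            rw [hδr] at h6
            linarith
    · intro n
      exact hg_z₀ n
  · push_neg at hcase
    obtain ⟨z₁, hz₁mem, hz₁ne⟩ := hcase
    have hz₁ : Complex.abs z₁ < 1 := mem_ball_iff_abs.1 hz₁mem
    set tn : ℕ → ℝ := fun n => Complex.abs (g n z₁) with htn_def
    set tinf : ℝ := ⨅ n, tn n with htinf_def
    have htinf0 : 0 ≤ tinf := le_ciInf fun n => Complex.abs.nonneg _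
    have htinfpos : 0 < tinf := lt_of_le_of_ne htinf0 (Ne.symm hz₁ne)
    have htn_anti : Antitone tn := hanti z₁ hz₁
    have htn_lb : ∀ n, tinf ≤ tn n := fun n => ciInf_le (hbdd z₁) n
    have htn_pos : ∀ n, 0 < tn n := fun n => lt_of_lt_of_le htinfpos (htn_lb n)
    have htn_lt1 : ∀ n, tn n < 1 := fun n => hgball n z₁ hz₁
    have htn_le0 : ∀ n, tn n ≤ tn 0 := fun n => htn_anti (Nat.zero_le n)
    have htends : Tendsto tn atTop (𝓝 tinf) := hL z₁ hz₁
    have hgz₁_ne : ∀ n, g n z₁ ≠ 0 := by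
      intro n hzero
      have h2 : tn n = 0 := by show Complex.abs (g n z₁) = 0; rw [hzero]; simp
      exact (htn_pos n).ne' h2
    set c : ℕ → ℂ := fun n => g n z₁ / ((tn n : ℝ) : ℂ) with hc_def
    have habs_c : ∀ n, Complex.abs (c n) = 1 := by
      intro n
      show Complex.abs (g n z₁ / ((tn n : ℝ) : ℂ)) = 1
      rw [map_div₀, Complex.abs_ofReal, _root_.abs_of_pos (htn_pos n)]
      exact div_self (htn_pos n).ne'
    have hc_ne : ∀ n, c n ≠ 0 := by
      intro n hzero
      have := habs_c n
      rw [hzero] at this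
      simp at this
    set γinv : ℕ → ℂ → ℂ := fun n z => mob (a n) z / c n with hγinv_def
    set γ : ℕ → ℂ → ℂ := fun n z => mob (-(a n)) (c n * z) with hγ_def
    set G : ℕ → ℂ → ℂ := fun n z => γinv n (f^[n] z) with hG_def
    have habs_G : ∀ n z, Complex.abs (G n z) = Complex.abs (g n z) := by
      intro n z
      show Complex.abs (mob (a n) (f^[n] z) / c n) = _
      rw [map_div₀, habs_c n, div_one]
    have hman : ∀ n, Complex.abs (-(a n)) < 1 := fun n => by simpa using han n
    have hγinv_hol : ∀ n, HolSelfDisk (γinv n) := by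
      intro n
      refine ⟨(mob_differentiableOn (han n)).div_const _, ?_⟩
      intro z hz
      rw [mem_ball_iff_abs] at hz ⊢
      show Complex.abs (mob (a n) z / c n) < 1
      rw [map_div₀, habs_c n, div_one]
      exact abs_mob_lt_one (han n) hz
    have hrot_hol : ∀ n, HolSelfDisk (fun z => c n * z) := by
      intro n
      refine ⟨((differentiable_const _).mul differentiable_id).differentiableOn, ?_⟩
      intro z hz
      rw [mem_ball_iff_abs] at hz ⊢
      rw [map_mul, habs_c n, one_mul]
      exact hz
    have hγ_hol : ∀ n, HolSelfDisk (γ n) := fun n =>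
      (mob_holSelf (hman n)).comp (hrot_hol n)
    have hAut : ∀ n, IsDiskAutPair (γ n) (γinv n) := by
      intro n
      refine ⟨hγ_hol n, hγinv_hol n, ?_, ?_⟩
      · intro z hz
        rw [mem_ball_iff_abs] at hz
        show mob (a n) (mob (-(a n)) (c n * z)) / c n = z
        have hcz : Complex.abs (c n * z) < 1 := by rw [map_mul, habs_c n, one_mul]; exact hz
        rw [mob_mob' (han n) hcz, mul_comm, mul_div_assoc, div_self (hc_ne n), mul_one]
      · intro z hz
        rw [mem_ball_iff_abs] at hz
        show mob (-(a n)) (c n * (mob (a n) z / c n)) = z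
        rw [mul_comm, div_mul_cancel₀ _ (hc_ne n)]
        exact mob_mob (han n) hz
    have hGz₁ : ∀ n, G n z₁ = ((tn n : ℝ) : ℂ) := by
      intro n
      show g n z₁ / c n = ((tn n : ℝ) : ℂ)
      rw [hc_def]
      rw [div_div_eq_mul_div, mul_comm (g n z₁), mul_div_assoc, div_self (hgz₁_ne n), mul_one]
    have hGz₀ : ∀ n, G n z₀ = 0 := by
      intro n
      show g n z₀ / c n = 0
      rw [hg_z₀ n, zero_div]
    have hGhol : ∀ n, HolSelfDisk (G n) := fun n => (hγinv_hol n).comp (hfn n)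
    set ψ : ℕ → ℂ → ℂ := fun n w => γinv (n+1) (f (γ n w)) with hψ_def
    have hψhol : ∀ n, HolSelfDisk (ψ n) := fun n =>
      ((hγinv_hol (n+1)).comp hf).comp (hγ_hol n)
    have hψ0 : ∀ n, ψ n 0 = 0 := by
      intro n
      show γinv (n+1) (f (mob (-(a n)) (c n * 0))) = 0
      rw [mul_zero, mob_zero_right, ← ha_succ n]
      show mob (a (n+1)) (a (n+1)) / c (n+1) = 0
      rw [mob_self, zero_div]
    have hψG : ∀ n z, Complex.abs z < 1 → ψ n (G n z) = G (n+1) z := by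
      intro n z hz
      have hiter : Complex.abs (f^[n] z) < 1 :=
        mem_ball_iff_abs.1 ((hfn n).2 (mem_ball_iff_abs.2 hz))
      show γinv (n+1) (f (mob (-(a n)) (c n * (g n z / c n)))) = G (n+1) z
      rw [mul_comm, div_mul_cancel₀ _ (hc_ne n)]
      have : mob (-(a n)) (g n z) = f^[n] z := mob_mob (han n) hiter
      rw [this, ← Function.iterate_succ_apply' f n z]
    have hψt : ∀ n, ψ n ((tn n : ℝ) : ℂ) = ((tn (n+1) : ℝ) : ℂ) := by
      intro n
      rw [← hGz₁ n, hψG n z₁ hz₁, hGz₁ (n+1)]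
    -- key telescoping estimate, for points with pseudo-distance ≤ r' from z₀
    have hstep : ∀ r' : ℝ, 0 ≤ r' → r' < 1 → ∃ D : ℝ, 0 ≤ D ∧
        ∀ z, Complex.abs z < 1 → Complex.abs (mob z₀ z) ≤ r' →
          ∀ n m, n ≤ m → Complex.abs (G m z - G n z) ≤ D * (tn n - tn m) := by
      intro r' hr'0 hr'1
      have ht₀1 : tn 0 < 1 := htn_lt1 0
      have ht₀0 : (0:ℝ) ≤ tn 0 := (htn_pos 0).le
      set ρ : ℝ := Real.sqrt (1 - (1 - (tn 0)^2) * (1 - r'^2) / 4) with hρ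
      have hρ0 : 0 ≤ ρ := Real.sqrt_nonneg _
      have hρ1 : ρ < 1 := by
        rw [hρ, Real.sqrt_lt' one_pos]
        nlinarith [mul_pos (show (0:ℝ) < 1 - tn 0^2 by nlinarith)
          (show (0:ℝ) < 1 - r'^2 by nlinarith)]
      set D : ℝ := (1 + ρ) / (1 - ρ) / tinf with hD
      have hA0 : 0 ≤ (1 + ρ) / (1 - ρ) := div_nonneg (by linarith) (by linarith)
      have hD0 : 0 ≤ D := div_nonneg hA0 htinfpos.le
      refine ⟨D, hD0, ?_⟩
      intro z hzb hzr'
      have hstep1 : ∀ n, Complex.abs (G (n+1) z - G n z) ≤ D * (tn n - tn (n+1)) := by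
        intro n
        have hGz1 : Complex.abs (G n z) < 1 := by rw [habs_G]; exact hgball n z hzb
        have hGzr : Complex.abs (G n z) ≤ r' := by
          rw [habs_G]; exact (hbd z hzb n).trans hzr'
        have hρz : Complex.abs (mob ((tn n : ℝ) : ℂ) (G n z)) ≤ ρ := by
          rw [hρ]
          refine abs_mob_le_bound ht₀1 hr'1 ?_ hGzr ht₀0 hr'0
          rw [Complex.abs_ofReal, _root_.abs_of_pos (htn_pos n)]
          exact htn_le0 n
        have hkey := key_est (hψhol n) (hψ0 n) (htn_pos n) (htn_lt1 n) (htn_pos (n+1))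
          (htn_anti (Nat.le_succ n)) (hψt n) hρ0 hρ1 hGz1 hρz
        rw [hψG n z hzb] at hkey
        refine hkey.trans ?_
        have hΔ0 : 0 ≤ tn n - tn (n+1) := by linarith [htn_anti (Nat.le_succ n)]
        have hdd : (tn n - tn (n+1)) / tn n ≤ (tn n - tn (n+1)) / tinf :=
          div_le_div_of_nonneg_left hΔ0 htinfpos (htn_lb n)
        have := mul_le_mul_of_nonneg_left hdd hA0
        have heq : D * (tn n - tn (n+1)) = (1 + ρ) / (1 - ρ) * ((tn n - tn (n+1)) / tinf) := by
          rw [hD]; ring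
        linarith
      intro n m hnm
      induction m, hnm using Nat.le_induction with
      | base => simp
      | succ m hm ih =>
          have h8 := hstep1 m
          have htri : Complex.abs (G (m+1) z - G n z)
              ≤ Complex.abs (G (m+1) z - G m z) + Complex.abs (G m z - G n z) := by
            have := Complex.abs.add_le (G (m+1) z - G m z) (G m z - G n z)
            rwa [sub_add_sub_cancel] at this
          have := htn_anti (Nat.le_succ m)
          calc Complex.abs (G (m+1) z - G n z)
              ≤ Complex.abs (G (m+1) z - G m z) + Complex.abs (G m z - G n z) := htri
            _ ≤ D * (tn m - tn (m+1)) + D * (tn n - tn m) := by linarith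
            _ = D * (tn n - tn (m+1)) := by ring
    -- auxiliary: D * (tn N - tinf) gets arbitrarily small
    have hsmall : ∀ D : ℝ, 0 ≤ D → ∀ ε : ℝ, 0 < ε → ∃ N, D * (tn N - tinf) < ε := by
      intro D hD0 ε hε
      have hlt : tinf < tinf + ε / (D + 1) := by
        have : 0 < ε / (D + 1) := by positivity
        linarith
      obtain ⟨N, hN⟩ := (htends.eventually_lt_const hlt).exists
      refine ⟨N, ?_⟩
      have hq : ε / (D + 1) * (D + 1) = ε := div_mul_cancel₀ _ (by linarith)
      have h1 : tn N - tinf < ε / (D + 1) := by linarith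
      have h2 : D * (tn N - tinf) ≤ D * (ε / (D + 1)) :=
        mul_le_mul_of_nonneg_left h1.le hD0
      nlinarith [htn_lb N]
    have hcauchy : ∀ z, Complex.abs z < 1 → CauchySeq (fun n => G n z) := by
      intro z hz
      obtain ⟨D, hD0, hch⟩ := hstep (Complex.abs (mob z₀ z)) (Complex.abs.nonneg _)
        (abs_mob_lt_one hz₀' hz)
      rw [Metric.cauchySeq_iff']
      intro ε hε
      obtain ⟨N, hN⟩ := hsmall D hD0 ε hε
      refine ⟨N, fun n hn => ?_⟩
      rw [Complex.dist_eq, Complex.norm_eq_abs]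
      have h9 := hch z hz (le_refl _) N n hn
      have h10 : D * (tn N - tn n) ≤ D * (tn N - tinf) :=
        mul_le_mul_of_nonneg_left (by linarith [htn_lb n]) hD0
      linarith
    set h : ℂ → ℂ := fun z => limUnder atTop (fun n => G n z) with hh_def
    have htendh : ∀ z, Complex.abs z < 1 → Tendsto (fun n => G n z) atTop (𝓝 (h z)) :=
      fun z hz => (hcauchy z hz).tendsto_limUnder
    have hTLU : TendstoLocallyUniformlyOn (fun n z => γinv n (f^[n] z)) h atTop
        (ball (0:ℂ) 1) := by
      rw [tendstoLocallyUniformlyOn_iff_forall_isCompact isOpen_ball]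
      intro K hKsub hKc
      obtain ⟨r', hr'0, hr'1, hKr'⟩ : ∃ r', 0 ≤ r' ∧ r' < 1 ∧
          ∀ z ∈ K, Complex.abs (mob z₀ z) ≤ r' := by
        rcases K.eq_empty_or_nonempty with rfl | hne
        · exact ⟨0, le_refl _, by norm_num, by simp⟩
        · obtain ⟨x, hxK, hx⟩ := hKc.exists_isMaxOn hne
            (Complex.continuous_abs.comp_continuousOn
              ((mob_differentiableOn hz₀').continuousOn.mono hKsub))
          exact ⟨Complex.abs (mob z₀ x), Complex.abs.nonneg _,
            abs_mob_lt_one hz₀' (mem_ball_iff_abs.1 (hKsub hxK)), fun z hz => hx hz⟩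
      obtain ⟨D, hD0, hch⟩ := hstep r' hr'0 hr'1
      rw [Metric.tendstoUniformlyOn_iff]
      intro ε hε
      obtain ⟨N, hN⟩ := hsmall D hD0 ε hε
      filter_upwards [eventually_ge_atTop N] with n hn z hzK
      have hz := mem_ball_iff_abs.1 (hKsub hzK)
      have hzr' := hKr' z hzK
      show dist (h z) (G n z) < ε
      have hlim : Tendsto (fun m => dist (G m z) (G n z)) atTop
          (𝓝 (dist (h z) (G n z))) := (htendh z hz).dist tendsto_const_nhds
      have hbound : ∀ᶠ m in atTop, dist (G m z) (G n z) ≤ D * (tn n - tinf) := by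
        filter_upwards [eventually_ge_atTop n] with m hm
        rw [Complex.dist_eq]
        refine (hch z hz hzr' n m hm).trans ?_
        exact mul_le_mul_of_nonneg_left (by linarith [htn_lb m]) hD0
      have hdle : dist (h z) (G n z) ≤ D * (tn n - tinf) := le_of_tendsto hlim hbound
      have h14 : tn n ≤ tn N := htn_anti hn
      have h15 : D * (tn n - tinf) ≤ D * (tn N - tinf) :=
        mul_le_mul_of_nonneg_left (by linarith) hD0
      linarith
    refine ⟨h, γ, γinv, ⟨?_, ?_⟩, hAut, hTLU, fun n => hGz₀ n, ?_⟩
    · exact hTLU.differentiableOn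
        (Filter.Eventually.of_forall fun n => (hGhol n).1) isOpen_ball
    · intro z hzmem
      have hz := mem_ball_iff_abs.1 hzmem
      have hlim : Tendsto (fun n => Complex.abs (G n z)) atTop
          (𝓝 (Complex.abs (h z))) := (Complex.continuous_abs.tendsto _).comp (htendh z hz)
      have hle : Complex.abs (h z) ≤ Complex.abs (mob z₀ z) :=
        le_of_tendsto hlim (Filter.Eventually.of_forall fun n => by
          rw [habs_G]; exact hbd z hz n)
      exact mem_ball_iff_abs.2 (lt_of_le_of_lt hle (abs_mob_lt_one hz₀' hz))
    · have h0 : Tendsto (fun n => G n z₀) atTop (𝓝 0) := by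
        have : (fun n => G n z₀) = fun _ => (0:ℂ) := funext fun n => hGz₀ n
        rw [this]
        exact tendsto_const_nhds
      exact tendsto_nhds_unique (htendh z₀ hz₀') h0
end

section
/- Let F be a holomorphic self-map of the upper half-plane H⁺, parabolic with Wolff point at ∞ and with positive hyperbolic step (i.e., s^F(w) > 0 for some, equivalently every, w ∈ H⁺). Then lim_{n→∞} |arg F^n(w) − π/2| = π/2 for every w ∈ H⁺, i.e., every orbit converges to ∞ tangentially to the real axis. -/
open Complex Metric Filter Set

/-- The upper half-plane as a subset of ℂ. -/
def UHP : Set ℂ := {w : ℂ | 0 < w.im}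

/-- Poincaré distance on the upper half-plane. -/
noncomputable def pdH (w₁ w₂ : ℂ) : ℝ :=
  artanh ‖(w₂ - w₁) / (w₂ - (starRingEnd ℂ) w₁)‖

/-- Holomorphic self-map of the upper half-plane. -/
def HolSelfUHP (F : ℂ → ℂ) : Prop :=
  DifferentiableOn ℂ F UHP ∧ MapsTo F UHP UHP

/-- A sequence in the upper half-plane converges non-tangentially to ∞. -/
def NonTangToInf (w : ℕ → ℂ) : Prop :=
  Tendsto (fun n => ‖w n‖) atTop atTop ∧
  ∃ ε > 0, ∀ n, ε * ‖w n‖ ≤ (w n).im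

/-- `F` is a parabolic holomorphic self-map of the upper half-plane with Wolff point ∞:
fixed-point-free, iterates tend to ∞ locally uniformly, and `F w / w → 1` along
sequences converging non-tangentially to ∞. -/
def ParabolicAtInf (F : ℂ → ℂ) : Prop :=
  HolSelfUHP F ∧ (∀ w ∈ UHP, F w ≠ w) ∧
  (∀ K ⊆ UHP, IsCompact K → ∀ M : ℝ,
    ∀ᶠ n in atTop, ∀ w ∈ K, M ≤ ‖F^[n] w‖) ∧
  (∀ w : ℕ → ℂ, (∀ n, w n ∈ UHP) → NonTangToInf w →
    Tendsto (fun n => F (w n) / w n) atTop (nhds 1))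

lemma artanh_contAt_zero : ContinuousAt artanh 0 := by
  have h1 : ContinuousAt (fun t : ℝ => (1 + t) / (1 - t)) 0 :=
    (continuousAt_const.add continuousAt_id).div
      (continuousAt_const.sub continuousAt_id) (by norm_num)
  exact continuousAt_const.mul (h1.log (by norm_num))

lemma artanh_zero : artanh 0 = 0 := by simp [artanh]

theorem stmt17 (F : ℂ → ℂ) (hF : ParabolicAtInf F)
    (hstep : ∀ w ∈ UHP, ∃ s > 0,
      Tendsto (fun n => pdH (F^[n] w) (F^[n+1] w)) atTop (nhds s)) :
    ∀ w ∈ UHP,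
      Tendsto (fun n => |(F^[n] w).arg - Real.pi / 2|) atTop (nhds (Real.pi / 2)) := by
  obtain ⟨⟨hdiff, hmaps⟩, hfix, hesc, hhorn⟩ := hF
  intro w hw
  set z : ℕ → ℂ := fun n => F^[n] w with hzdef
  have hzU : ∀ n, z n ∈ UHP := fun n => (hmaps.iterate n) hw
  have habs : Tendsto (fun n => ‖z n‖) atTop atTop := by
    rw [Filter.tendsto_atTop]
    intro M
    exact (hesc {w} (singleton_subset_iff.2 hw) isCompact_singleton M).mono
      (fun n h => h w rfl)
  have hpi := Real.pi_pos
  -- key claim: the orbit eventually leaves every non-tangential region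
  have key : ∀ ε : ℝ, 0 < ε → ε ≤ Real.pi/4 →
      ∀ᶠ n in atTop, Real.pi/2 - ε < |(z n).arg - Real.pi/2| := by
    intro ε hε hε4
    by_contra hcon
    rw [Filter.not_eventually] at hcon
    have hcon' : ∃ᶠ n in atTop, |(z n).arg - Real.pi/2| ≤ Real.pi/2 - ε :=
      hcon.mono (fun n h => not_lt.1 h)
    obtain ⟨φ, hφ, hP⟩ := Filter.extraction_of_frequently_atTop hcon'
    set u : ℕ → ℂ := fun k => z (φ k) with hudef
    have huU : ∀ k, u k ∈ UHP := fun k => hzU (φ k)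
    have himpos : ∀ k, 0 < (u k).im := fun k => huU k
    have hune : ∀ k, u k ≠ 0 := by
      intro k h
      have h2 := himpos k
      rw [h] at h2
      simp at h2
    have hupos : ∀ k, 0 < ‖u k‖ := fun k => norm_pos_iff.2 (hune k)
    have hsε : 0 < Real.sin ε := Real.sin_pos_of_pos_of_lt_pi hε (by linarith)
    have harg : ∀ k, ε ≤ (u k).arg ∧ (u k).arg ≤ Real.pi - ε := by
      intro k
      have h := abs_le.1 (hP k)
      constructor <;> [linarith [h.1]; linarith [h.2]]
    have hsin : ∀ k, Real.sin ε ≤ Real.sin ((u k).arg) := by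
      intro k
      obtain ⟨h1, h2⟩ := harg k
      rcases le_or_gt ((u k).arg) (Real.pi/2) with hle | hgt
      · exact Real.strictMonoOn_sin.monotoneOn
          ⟨by linarith, by linarith⟩ ⟨by linarith, by linarith⟩ h1
      · calc Real.sin ε ≤ Real.sin (Real.pi - (u k).arg) :=
              Real.strictMonoOn_sin.monotoneOn
                ⟨by linarith, by linarith⟩ ⟨by linarith, by linarith⟩ (by linarith)
          _ = Real.sin ((u k).arg) := Real.sin_pi_sub _
    have him : ∀ k, Real.sin ε * ‖u k‖ ≤ (u k).im := by
      intro k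
      have h2 : Real.sin ((u k).arg) * ‖u k‖ = (u k).im := by
        rw [Complex.sin_arg]
        exact div_mul_cancel₀ _ (ne_of_gt (hupos k))
      rw [← h2]
      exact mul_le_mul_of_nonneg_right (hsin k) (hupos k).le
    have hNT : NonTangToInf u :=
      ⟨habs.comp hφ.tendsto_atTop, Real.sin ε, hsε, him⟩
    have hq : Tendsto (fun k => F (u k) / u k) atTop (nhds 1) := hhorn u huU hNT
    -- g k := |F(u k)/u k - 1| → 0
    have hg : Tendsto (fun k => ‖F (u k) / u k - 1‖) atTop (nhds 0) := by
      have h1 : Tendsto (fun k => F (u k) / u k - 1) atTop (nhds 0) := by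
        simpa using hq.sub_const 1
      have h2 := (continuous_norm.tendsto (0:ℂ)).comp h1
      simpa [Function.comp_def] using h2
    have hgev : ∀ᶠ k in atTop, ‖F (u k) / u k - 1‖ < Real.sin ε :=
      hg.eventually (eventually_lt_nhds hsε)
    have hnum : ∀ k, ‖F (u k) - u k‖
        = ‖u k‖ * ‖F (u k) / u k - 1‖ := by
      intro k
      have he : F (u k) - u k = u k * (F (u k) / u k - 1) := by
        rw [mul_sub, mul_one, mul_div_cancel₀ _ (hune k)]
      rw [he, norm_mul]
    -- the quotient tends to 0
    have ht0 : Tendsto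
        (fun k => ‖(F (u k) - u k) / (F (u k) - (starRingEnd ℂ) (u k))‖)
        atTop (nhds 0) := by
      apply squeeze_zero' (Filter.Eventually.of_forall fun k => norm_nonneg _)
        (g := fun k => ‖F (u k) / u k - 1‖ / Real.sin ε)
      · filter_upwards [hgev] with k hk
        have hconj : ‖(u k) - (starRingEnd ℂ) (u k)‖ = 2 * (u k).im := by
          have he : (u k) - (starRingEnd ℂ) (u k) = ((2 * (u k).im : ℝ) : ℂ) * Complex.I := by
            apply Complex.ext <;> simp <;> ring_nf
          rw [he, norm_mul, Complex.norm_I, mul_one, Complex.norm_real, Real.norm_eq_abs,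
            _root_.abs_of_nonneg (mul_nonneg (by norm_num) (himpos k).le)]
        have htri : 2 * (u k).im ≤ ‖F (u k) - u k‖
            + ‖F (u k) - (starRingEnd ℂ) (u k)‖ := by
          calc 2 * (u k).im = ‖(u k) - (starRingEnd ℂ) (u k)‖ := hconj.symm
            _ = ‖((u k) - F (u k)) + (F (u k) - (starRingEnd ℂ) (u k))‖ := by
                ring_nf
            _ ≤ ‖(u k) - F (u k)‖
                + ‖F (u k) - (starRingEnd ℂ) (u k)‖ := norm_add_le _ _
            _ = ‖F (u k) - u k‖
                + ‖F (u k) - (starRingEnd ℂ) (u k)‖ := by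
                rw [← norm_neg ((u k) - F (u k))]; ring_nf
        have hden : Real.sin ε * ‖u k‖
            ≤ ‖F (u k) - (starRingEnd ℂ) (u k)‖ := by
          have h1 := him k
          have h2 : ‖F (u k) - u k‖ ≤ Real.sin ε * ‖u k‖ := by
            rw [hnum k]
            calc ‖u k‖ * ‖F (u k) / u k - 1‖
                ≤ ‖u k‖ * Real.sin ε :=
                  mul_le_mul_of_nonneg_left hk.le (hupos k).le
              _ = Real.sin ε * ‖u k‖ := mul_comm _ _
          linarith
        have hdenpos : 0 < Real.sin ε * ‖u k‖ := mul_pos hsε (hupos k)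
        rw [norm_div, hnum k]
        calc ‖u k‖ * ‖F (u k) / u k - 1‖
              / ‖F (u k) - (starRingEnd ℂ) (u k)‖
            ≤ ‖u k‖ * ‖F (u k) / u k - 1‖
              / (Real.sin ε * ‖u k‖) := by
              apply div_le_div_of_nonneg_left _ hdenpos hden
              exact mul_nonneg (hupos k).le (norm_nonneg _)
          _ = ‖F (u k) / u k - 1‖ / Real.sin ε := by
              rw [mul_comm (Real.sin ε) (‖u k‖), mul_div_mul_left]
              exact ne_of_gt (hupos k)
      · simpa using hg.div_const (Real.sin ε)
    -- hence hyperbolic steps along the subsequence tend to 0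
    have hpd0 : Tendsto (fun k => pdH (u k) (F (u k))) atTop (nhds 0) := by
      have h1 := (artanh_contAt_zero.tendsto).comp ht0
      rw [artanh_zero] at h1
      exact h1
    -- but they tend to s > 0
    obtain ⟨s, hs, hsl⟩ := hstep w hw
    have hsl' : Tendsto (fun k => pdH (u k) (F (u k))) atTop (nhds s) := by
      have h1 : Tendsto (fun k => pdH (z (φ k)) (z (φ k + 1))) atTop (nhds s) :=
        hsl.comp hφ.tendsto_atTop
      have h2 : ∀ k, z (φ k + 1) = F (u k) := by
        intro k
        simp only [hzdef, hudef]
        exact Function.iterate_succ_apply' F (φ k) w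
      simpa only [h2] using h1
    have : s = 0 := tendsto_nhds_unique hsl' hpd0
    linarith
  -- conclude
  rw [Metric.tendsto_atTop]
  intro ε hε
  set ε' := min ε (Real.pi/4) with hε'def
  have hε'pos : 0 < ε' := lt_min hε (by linarith)
  have hε'4 : ε' ≤ Real.pi/4 := min_le_right _ _
  obtain ⟨N, hN⟩ := (key ε' hε'pos hε'4).exists_forall_of_atTop
  refine ⟨N, fun n hn => ?_⟩
  have hargle : (z n).arg ≤ Real.pi := Complex.arg_le_pi _
  have hargge : 0 ≤ (z n).arg := Complex.arg_nonneg_iff.2 (le_of_lt (hzU n))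
  have habs2 : |(z n).arg - Real.pi/2| ≤ Real.pi/2 := by
    rw [abs_le]; constructor <;> linarith
  have hkey := hN n hn
  rw [Real.dist_eq, abs_of_nonpos (by linarith)]
  have : ε' ≤ ε := min_le_left _ _
  linarith
end
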